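/- Let ε ∈ (0,1), let k = ⌈4/ε⌉, and let Σ₁ and Σ₂ be disjoint alphabets. Suppose that for every integer i ≥ 1 there is given an (ε/2)-synchronization string S_{k^i} of length k^i, which is over Σ₁ if i is odd and over Σ₂ if i is even. Then the infinite sequential concatenation S = S_k ∘ S_{k²} ∘ S_{k³} ∘ … is an infinite ε-synchronization string over the alphabet Σ₁ ∪ Σ₂. -/

import Mathlib

/-- The length of a longest common subsequence of two strings (lists). -/
noncomputable def lcsLen {α : Type*} (S T : List α) : ℕ :=
  sSup {n | ∃ U : List α, U.length = n ∧ U.Sublist S ∧ U.Sublist T}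

/-- The edit distance (insertions/deletions) between two strings, via
`ED(S,T) = |S| + |T| - 2·LCS(S,T)`. -/
noncomputable def editDistance {α : Type*} (S T : List α) : ℕ :=
  S.length + T.length - 2 * lcsLen S T

/-- `strSlice S a b` is the substring `S[a, b)` of `S` (1-indexed, `b` excluded). -/
def strSlice {α : Type*} (S : List α) (a b : ℕ) : List α :=
  (S.drop (a - 1)).take (b - a)

/-- `islice f a b` is the substring `f[a, b)` of the infinite string `f`
(1-indexed, `b` excluded). -/
def islice {α : Type*} (f : ℕ → α) (a b : ℕ) : List α :=
  (List.range (b - a)).map fun t => f (a + t)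

/-- `S` is an ε-synchronization string: for all `1 ≤ i < j < k ≤ |S| + 1`,
`ED(S[i,j), S[j,k)) > (1-ε)(k-i)`. -/
def IsSyncString {α : Type*} (ε : ℝ) (S : List α) : Prop :=
  ∀ i j k : ℕ, 1 ≤ i → i < j → j < k → k ≤ S.length + 1 →
    (1 - ε) * ((k : ℝ) - (i : ℝ)) < (editDistance (strSlice S i j) (strSlice S j k) : ℝ)

/-- `S` is an ε-synchronization circle: every cyclic rotation of `S` is an
ε-synchronization string. -/
def IsSyncCircle {α : Type*} (ε : ℝ) (S : List α) : Prop :=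
  ∀ i : ℕ, 1 ≤ i → i ≤ S.length → IsSyncString ε (S.rotate (i - 1))

/-- An infinite ε-synchronization string (1-indexed). -/
def IsInfSyncString {α : Type*} (ε : ℝ) (f : ℕ → α) : Prop :=
  ∀ i j k : ℕ, 1 ≤ i → i < j → j < k →
    (1 - ε) * ((k : ℝ) - (i : ℝ)) < (editDistance (islice f i j) (islice f j k) : ℝ)

/-- `S` is a `c`-long-distance ε-synchronization string: for all
`1 ≤ i < j ≤ i' < j' ≤ |S| + 1` with `l = (j-i)+(j'-i')`, if the two intervals
are adjacent (`i' = j`) or `l > c · log |S|`, then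
`ED(S[i,j), S[i',j')) > (1-ε)·l`. -/
noncomputable def IsLongDistSyncString {α : Type*} (c ε : ℝ) (S : List α) : Prop :=
  ∀ i j i' j' : ℕ, 1 ≤ i → i < j → j ≤ i' → i' < j' → j' ≤ S.length + 1 →
    (i' = j ∨ c * Real.log (S.length : ℝ) < ((j : ℝ) - i) + ((j' : ℝ) - i')) →
    (1 - ε) * (((j : ℝ) - i) + ((j' : ℝ) - i')) <
      (editDistance (strSlice S i j) (strSlice S i' j') : ℝ)

/-- An infinite weak ε-synchronization string: for all `1 ≤ i < j < k`,
`ED(S[i,j), S[j,k)) ≥ ⌊(1-ε)(k-i)⌋`. -/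
def IsInfWeakSyncString {α : Type*} (ε : ℝ) (f : ℕ → α) : Prop :=
  ∀ i j k : ℕ, 1 ≤ i → i < j → j < k →
    ((⌊(1 - ε) * ((k : ℝ) - (i : ℝ))⌋ : ℤ) : ℝ) ≤
      (editDistance (islice f i j) (islice f j k) : ℝ)

namespace SyncAux
open List

variable {α : Type*}

lemma lcs_mem_bdd {S T : List α} {n : ℕ}
    (h : n ∈ {n | ∃ U : List α, U.length = n ∧ U.Sublist S ∧ U.Sublist T}) : n ≤ S.length := by
  obtain ⟨U, rfl, hS, _⟩ := h; exact hS.length_le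

lemma lcsLen_le_left (S T : List α) : lcsLen S T ≤ S.length :=
  csSup_le ⟨0, [], rfl, nil_sublist _, nil_sublist _⟩ fun _ hn => lcs_mem_bdd hn

lemma lcsLen_le_right (S T : List α) : lcsLen S T ≤ T.length :=
  csSup_le ⟨0, [], rfl, nil_sublist _, nil_sublist _⟩ fun _ hn => by
    obtain ⟨U, rfl, _, hT⟩ := hn; exact hT.length_le

lemma lcs_bddAbove (S T : List α) :
    BddAbove {n | ∃ U : List α, U.length = n ∧ U.Sublist S ∧ U.Sublist T} :=
  ⟨S.length, fun _ hn => lcs_mem_bdd hn⟩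

lemma le_lcsLen {S T U : List α} (h1 : U.Sublist S) (h2 : U.Sublist T) :
    U.length ≤ lcsLen S T :=
  le_csSup (lcs_bddAbove S T) ⟨U, rfl, h1, h2⟩

lemma exists_lcs (S T : List α) :
    ∃ U : List α, U.length = lcsLen S T ∧ U.Sublist S ∧ U.Sublist T := by
  have h0 : (0:ℕ) ∈ {n | ∃ U : List α, U.length = n ∧ U.Sublist S ∧ U.Sublist T} :=
    ⟨[], rfl, nil_sublist _, nil_sublist _⟩
  have h := Nat.sSup_mem ⟨0, h0⟩ (lcs_bddAbove S T)
  obtain ⟨U, hU, h1, h2⟩ := h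
  exact ⟨U, hU, h1, h2⟩

lemma two_lcs_le (S T : List α) : 2 * lcsLen S T ≤ S.length + T.length := by
  have h1 := lcsLen_le_left S T
  have h2 := lcsLen_le_right S T
  omega

lemma editDistance_cast (S T : List α) :
    (editDistance S T : ℝ) = (S.length : ℝ) + T.length - 2 * (lcsLen S T : ℝ) := by
  have h := two_lcs_le S T
  unfold editDistance
  push_cast [Nat.cast_sub h]
  ring

lemma lt_two_lcs_of_ED {δ : ℝ} {S T : List α}
    (h : (1 - δ) * ((S.length : ℝ) + T.length) < editDistance S T) :
    2 * (lcsLen S T : ℝ) < δ * ((S.length : ℝ) + T.length) := by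
  rw [editDistance_cast] at h; nlinarith [h]

lemma ED_of_two_lcs_lt {δ : ℝ} {S T : List α}
    (h : 2 * (lcsLen S T : ℝ) < δ * ((S.length : ℝ) + T.length)) :
    (1 - δ) * ((S.length : ℝ) + T.length) < editDistance S T := by
  rw [editDistance_cast]; nlinarith [h]

lemma length_islice (f : ℕ → α) (a b : ℕ) : (islice f a b).length = b - a := by
  simp [islice]

lemma mem_islice {f : ℕ → α} {a b : ℕ} {x : α} :
    x ∈ islice f a b ↔ ∃ p, a ≤ p ∧ p < b ∧ f p = x := by
  simp only [islice, mem_map, mem_range]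
  constructor
  · rintro ⟨t, ht, rfl⟩; exact ⟨a + t, by omega, by omega, rfl⟩
  · rintro ⟨p, h1, h2, rfl⟩
    exact ⟨p - a, by omega, by rw [Nat.add_sub_cancel' h1]⟩

lemma islice_append {f : ℕ → α} {a b c : ℕ} (hab : a ≤ b) (hbc : b ≤ c) :
    islice f a b ++ islice f b c = islice f a c := by
  apply List.ext_getElem
  · simp [islice]; omega
  · intro n h1 h2
    rcases lt_or_ge n (b - a) with h | h
    · rw [List.getElem_append_left (by simpa [length_islice] using h)]
      simp only [islice, getElem_map, getElem_range]
    · rw [List.getElem_append_right (by simpa [length_islice] using h)]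
      simp only [islice, getElem_map, getElem_range, length_islice, length_map, length_range]
      congr 1
      have h2' : n < c - a := by simpa [islice] using h2
      omega

lemma strSlice_islice {f : ℕ → α} {s e p q : ℕ} (hp : 1 ≤ p) (hpq : p ≤ q) (hq : s + q ≤ e + 1) :
    strSlice (islice f s e) p q = islice f (s + p - 1) (s + q - 1) := by
  apply List.ext_getElem
  · simp [strSlice, islice]; omega
  · intro n h1 h2
    simp only [strSlice, islice, getElem_take, getElem_drop, getElem_map, getElem_range]
    congr 1
    omega

lemma length_le_of_good_bad {X Y : Set α} (hXY : Disjoint X Y)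
    {U G Bd : List α} (hU : U.Sublist (G ++ Bd)) (hUX : ∀ x ∈ U, x ∈ X)
    (hBd : ∀ x ∈ Bd, x ∈ Y) : U.length ≤ G.length := by
  rw [List.sublist_append_iff] at hU
  obtain ⟨u1, u2, rfl, h1, h2⟩ := hU
  have hu2 : u2 = [] := by
    cases u2 with
    | nil => rfl
    | cons a t =>
      exfalso
      have ha1 : a ∈ X := hUX a (by simp)
      have ha2 : a ∈ Y := hBd a (h2.subset (by simp))
      exact Set.disjoint_left.mp hXY ha1 ha2
  subst hu2
  simpa using h1.length_le

lemma length_le_of_bad_good {X Y : Set α} (hXY : Disjoint X Y)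
    {U G Bd : List α} (hU : U.Sublist (Bd ++ G)) (hUX : ∀ x ∈ U, x ∈ X)
    (hBd : ∀ x ∈ Bd, x ∈ Y) : U.length ≤ G.length := by
  rw [List.sublist_append_iff] at hU
  obtain ⟨u1, u2, rfl, h1, h2⟩ := hU
  have hu1 : u1 = [] := by
    cases u1 with
    | nil => rfl
    | cons a t =>
      exfalso
      have ha1 : a ∈ X := hUX a (by simp)
      have ha2 : a ∈ Y := hBd a (h1.subset (by simp))
      exact Set.disjoint_left.mp hXY ha1 ha2
  subst hu1
  simpa using h2.length_le

lemma P_succ (K n : ℕ) :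
    ∑ j ∈ Finset.Icc 1 (n + 1), K ^ j = (∑ j ∈ Finset.Icc 1 n, K ^ j) + K ^ (n + 1) :=
  Finset.sum_Icc_succ_top (by omega) _

lemma P_mul (K n : ℕ) :
    K * (∑ j ∈ Finset.Icc 1 n, K ^ j) + K = ∑ j ∈ Finset.Icc 1 (n + 1), K ^ j := by
  induction n with
  | zero => simp
  | succ n ih =>
    rw [P_succ K n, P_succ K (n + 1), Nat.mul_add, ← pow_succ']
    omega

lemma P_le_P (K : ℕ) {a b : ℕ} (h : a ≤ b) :
    ∑ j ∈ Finset.Icc 1 a, K ^ j ≤ ∑ j ∈ Finset.Icc 1 b, K ^ j :=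
  Finset.sum_le_sum_of_subset (Finset.Icc_subset_Icc le_rfl h)

lemma le_P (K n : ℕ) (hK : 1 ≤ K) : n ≤ ∑ j ∈ Finset.Icc 1 n, K ^ j := by
  induction n with
  | zero => simp
  | succ n ih =>
    rw [P_succ]
    have : 1 ≤ K ^ (n + 1) := Nat.one_le_pow _ _ hK
    omega

lemma numeric1 {K i j k x y A s e p2 p3 E : ℕ}
    (hK : 5 ≤ K) (hi : 1 ≤ i) (hij : i < j) (hjk : j < k)
    (hsj : s < j) (hje : j ≤ e) (he : e = s + p2) (hE : E = e + p3) (hp3 : p3 = K * p2)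
    (hxb : x + i ≤ max i (A + 1)) (hid : x = 0 ∨ K * A + K = s)
    (hyb1 : y ≤ p2) (hyb2 : y + min k (E + 1) ≤ k) :
    K * x + K * y + i ≤ k := by
  have hKi : i ≤ K * i := Nat.le_mul_of_pos_left i (by omega)
  have hKy : K * y ≤ K * p2 := Nat.mul_le_mul_left K hyb1
  rcases Nat.eq_zero_or_pos y with hy0 | hypos
  all_goals rcases Nat.eq_zero_or_pos x with hx0 | hxpos
  all_goals try subst hy0
  all_goals try subst hx0
  all_goals try
    (have hxA : x + i ≤ A + 1 := by omega
     have hs : K * A + K = s := Or.resolve_left hid (by omega)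
     have h1 : K * (x + i) ≤ K * (A + 1) := Nat.mul_le_mul_left K hxA
     have e1 : K * (x + i) = K * x + K * i := by ring
     have e2 : K * (A + 1) = K * A + K := by ring)
  all_goals omega

lemma numeric2 {K i j k w s e : ℕ}
    (hK : 5 ≤ K) (hi : 1 ≤ i) (hij : i < j) (hjk : j < k)
    (hsj : s < j) (hje : j ≤ e) (hid : K * s + K = e)
    (hw1 : w + i ≤ max i (s + 1)) (hw2 : w + min k (e + 1) ≤ k) (hwpos : 1 ≤ w) :
    K * w + i < k := by
  have hKi : i ≤ K * i := Nat.le_mul_of_pos_left i (by omega)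
  have hw1' : w + i ≤ s + 1 := by omega
  have h1 : K * (w + i) ≤ K * (s + 1) := Nat.mul_le_mul_left K hw1'
  have hexp1 : K * (w + i) = K * w + K * i := by ring
  have hexp2 : K * (s + 1) = K * s + K := by ring
  omega

end SyncAux
set_option maxHeartbeats 1000000 in
lemma concat_main {α : Type*} (ε : ℝ) (hε : 0 < ε) (hε1 : ε < 1)
    (A B : Set α) (hAB : Disjoint A B) (K : ℕ)
    (hK4 : (4 : ℝ) ≤ ε * K) (hK5 : 5 ≤ K)
    (P : ℕ → ℕ) (hP0 : P 0 = 0) (hPs : ∀ n, P (n + 1) = P n + K ^ (n + 1))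
    (hPm : ∀ n, K * P n + K = P (n + 1))
    (T : ℕ → List α)
    (hlen : ∀ i, 1 ≤ i → (T i).length = K ^ i)
    (hsync : ∀ i, 1 ≤ i → IsSyncString (ε / 2) (T i))
    (hodd : ∀ i, 1 ≤ i → Odd i → ∀ x ∈ T i, x ∈ A)
    (heven : ∀ i, 1 ≤ i → Even i → ∀ x ∈ T i, x ∈ B)
    (f : ℕ → α)
    (hconcat : ∀ i, 1 ≤ i → islice f (P (i - 1) + 1) (P i + 1) = T i) :
    IsInfSyncString ε f := by
  intro i j k hi hij hjk
  classical
  have hle_P : ∀ n, n ≤ P n := by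
    intro n
    induction n with
    | zero => omega
    | succ n ih =>
      have h1 := hPs n
      have h2 : 1 ≤ K ^ (n + 1) := Nat.one_le_pow _ _ (by omega)
      omega
  have hex : ∃ m, j ≤ P m := ⟨j, hle_P j⟩
  obtain ⟨m, hm1, hmlt, hmle⟩ : ∃ m, 1 ≤ m ∧ P (m - 1) < j ∧ j ≤ P m := by
    have hspec : j ≤ P (Nat.find hex) := Nat.find_spec hex
    have hm1 : 1 ≤ Nat.find hex := by
      rcases Nat.eq_zero_or_pos (Nat.find hex) with h | h
      · exfalso; rw [h, hP0] at hspec; omega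
      · exact h
    refine ⟨Nat.find hex, hm1, ?_, hspec⟩
    have := Nat.find_min hex (show Nat.find hex - 1 < Nat.find hex by omega)
    omega
  have hse : P m = P (m - 1) + K ^ m := by
    have h := hPs (m - 1)
    have hm : m - 1 + 1 = m := by omega
    rw [hm] at h; exact h
  have hEe : P (m + 1) = P m + K ^ (m + 1) := hPs m
  have hsid : K * P (m - 1) + K = P m := by
    have h := hPm (m - 1)
    have hm : m - 1 + 1 = m := by omega
    rw [hm] at h; exact h
  have hp2pos : 1 ≤ K ^ m := Nat.one_le_pow _ _ (by omega)
  have hPmono : Monotone P := monotone_nat_of_le_succ fun n => by have := hPs n; omega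
  have hP12 : P (m - 2) ≤ P (m - 1) := hPmono (by omega)
  have hP23 : P m ≤ P (m + 1) := hPmono (by omega)
  have hTm : T m = islice f (P (m - 1) + 1) (P m + 1) := (hconcat m hm1).symm
  set X : Set α := if Odd m then A else B with hX
  set Y : Set α := if Odd m then B else A with hY
  have hXY : Disjoint X Y := by
    by_cases h : Odd m <;> simp [hX, hY, h, hAB, hAB.symm]
  have hfX : ∀ p, P (m - 1) < p → p ≤ P m → f p ∈ X := by
    intro p h1 h2
    have hp : f p ∈ T m := by
      rw [hTm, SyncAux.mem_islice]; exact ⟨p, by omega, by omega, rfl⟩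
    by_cases h : Odd m
    · simpa [hX, h] using hodd m hm1 h _ hp
    · have he' : Even m := Nat.not_odd_iff_even.mp h
      simpa [hX, h] using heven m hm1 he' _ hp
  have hfY1 : ∀ p, 2 ≤ m → P (m - 2) < p → p ≤ P (m - 1) → f p ∈ Y := by
    intro p h2 ha hb
    have hp : f p ∈ T (m - 1) := by
      rw [← hconcat (m - 1) (by omega), SyncAux.mem_islice]
      have hmm : m - 1 - 1 = m - 2 := by omega
      rw [hmm]
      exact ⟨p, by omega, by omega, rfl⟩
    by_cases h : Odd m
    · have he' : Even (m - 1) := by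
        rw [Nat.odd_iff] at h; rw [Nat.even_iff]; omega
      simpa [hY, h] using heven (m - 1) (by omega) he' _ hp
    · have ho' : Odd (m - 1) := by
        rw [Nat.odd_iff] at h ⊢; omega
      simpa [hY, h] using hodd (m - 1) (by omega) ho' _ hp
  have hfY2 : ∀ p, P m < p → p ≤ P (m + 1) → f p ∈ Y := by
    intro p ha hb
    have hp : f p ∈ T (m + 1) := by
      rw [← hconcat (m + 1) (by omega), SyncAux.mem_islice]
      have hmm : m + 1 - 1 = m := by omega
      rw [hmm]
      exact ⟨p, by omega, by omega, rfl⟩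
    by_cases h : Odd m
    · have he' : Even (m + 1) := by
        rw [Nat.odd_iff] at h; rw [Nat.even_iff]; omega
      simpa [hY, h] using heven (m + 1) (by omega) he' _ hp
    · have ho' : Odd (m + 1) := by
        rw [Nat.odd_iff] at h ⊢; omega
      simpa [hY, h] using hodd (m + 1) (by omega) ho' _ hp
  -- split points
  have hiu : i ≤ max i (P (m - 1) + 1) := le_max_left _ _
  have huj : max i (P (m - 1) + 1) ≤ j := by omega
  have hjv : j ≤ min k (P m + 1) := by omega
  have hvk : min k (P m + 1) ≤ k := min_le_left _ _
  have hL : islice f i j = islice f i (max i (P (m - 1) + 1)) ++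
      islice f (max i (P (m - 1) + 1)) j := (SyncAux.islice_append hiu huj).symm
  have hR : islice f j k = islice f j (min k (P m + 1)) ++
      islice f (min k (P m + 1)) k := (SyncAux.islice_append hjv hvk).symm
  have hXL2 : ∀ x ∈ islice f (max i (P (m - 1) + 1)) j, x ∈ X := by
    intro x hx; rw [SyncAux.mem_islice] at hx; obtain ⟨p, h1, h2, rfl⟩ := hx
    exact hfX p (by omega) (by omega)
  have hXR1 : ∀ x ∈ islice f j (min k (P m + 1)), x ∈ X := by
    intro x hx; rw [SyncAux.mem_islice] at hx; obtain ⟨p, h1, h2, rfl⟩ := hx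
    exact hfX p (by omega) (by omega)
  have hL1 : islice f i (max i (P (m - 1) + 1)) =
      islice f i (max i (P (m - 2) + 1)) ++
      islice f (max i (P (m - 2) + 1)) (max i (P (m - 1) + 1)) :=
    (SyncAux.islice_append (le_max_left _ _) (by omega)).symm
  have hYbad1 : ∀ x ∈ islice f (max i (P (m - 2) + 1)) (max i (P (m - 1) + 1)), x ∈ Y := by
    intro x hx; rw [SyncAux.mem_islice] at hx; obtain ⟨p, h1, h2, rfl⟩ := hx
    have h2m : 2 ≤ m := by
      by_contra hcon
      have e1 : P (m - 2) = 0 := by rw [show m - 2 = 0 by omega]; exact hP0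
      have e2 : P (m - 1) = 0 := by rw [show m - 1 = 0 by omega]; exact hP0
      omega
    exact hfY1 p h2m (by omega) (by omega)
  have hR2 : islice f (min k (P m + 1)) k =
      islice f (min k (P m + 1)) (min k (P (m + 1) + 1)) ++
      islice f (min k (P (m + 1) + 1)) k :=
    (SyncAux.islice_append (by omega) (min_le_left _ _)).symm
  have hYbad2 : ∀ x ∈ islice f (min k (P m + 1)) (min k (P (m + 1) + 1)), x ∈ Y := by
    intro x hx; rw [SyncAux.mem_islice] at hx; obtain ⟨p, h1, h2, rfl⟩ := hx
    exact hfY2 p (by omega) (by omega)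
  -- counting lemmas
  have hcount1 : ∀ Z : List α, Z.Sublist (islice f i (max i (P (m - 1) + 1))) →
      (∀ x ∈ Z, x ∈ X) → Z.length + i ≤ max i (P (m - 2) + 1) := by
    intro Z hZ hZX
    have h := SyncAux.length_le_of_good_bad hXY (hL1 ▸ hZ) hZX hYbad1
    rw [SyncAux.length_islice] at h
    omega
  have hcount2 : ∀ Z : List α, Z.Sublist (islice f (min k (P m + 1)) k) →
      (∀ x ∈ Z, x ∈ X) → Z.length + min k (P (m + 1) + 1) ≤ k := by
    intro Z hZ hZX
    have h := SyncAux.length_le_of_bad_good hXY (hR2 ▸ hZ) hZX hYbad2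
    rw [SyncAux.length_islice] at h
    omega
  -- the W bound, case 1 (in-block, via the synchronization property of T m)
  have hsyncW : ∀ Z : List α, Z.Sublist (islice f (max i (P (m - 1) + 1)) j) →
      Z.Sublist (islice f j (min k (P m + 1))) →
      Z.length = 0 ∨ 2 * (Z.length : ℝ) < ε / 2 * ((k : ℝ) - i) := by
    intro Z h1 h2
    rcases Nat.eq_zero_or_pos (j - max i (P (m - 1) + 1)) with hju | hju
    · left
      have hnil : islice f (max i (P (m - 1) + 1)) j = [] :=
        List.eq_nil_of_length_eq_zero (by rw [SyncAux.length_islice]; omega)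
      rw [hnil, List.sublist_nil] at h1
      simp [h1]
    · right
      have hult : max i (P (m - 1) + 1) < j := by omega
      have huP : P (m - 1) + 1 ≤ max i (P (m - 1) + 1) := le_max_right _ _
      have hslice1 : strSlice (T m) (max i (P (m - 1) + 1) - P (m - 1)) (j - P (m - 1)) =
          islice f (max i (P (m - 1) + 1)) j := by
        rw [hTm, SyncAux.strSlice_islice (by omega) (by omega) (by omega)]
        congr 1 <;> omega
      have hslice2 : strSlice (T m) (j - P (m - 1)) (min k (P m + 1) - P (m - 1)) =
          islice f j (min k (P m + 1)) := by
        rw [hTm, SyncAux.strSlice_islice (by omega) (by omega) (by omega)]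
        congr 1 <;> omega
      have hED := hsync m hm1 (max i (P (m - 1) + 1) - P (m - 1)) (j - P (m - 1))
        (min k (P m + 1) - P (m - 1)) (by omega) (by omega) (by omega)
        (by rw [hlen m hm1]; omega)
      rw [hslice1, hslice2] at hED
      have hcast : ((min k (P m + 1) - P (m - 1) : ℕ) : ℝ) -
          ((max i (P (m - 1) + 1) - P (m - 1) : ℕ) : ℝ) =
          ((islice f (max i (P (m - 1) + 1)) j).length : ℝ) +
          ((islice f j (min k (P m + 1))).length : ℝ) := by
        rw [SyncAux.length_islice, SyncAux.length_islice]
        have c1 : P (m - 1) ≤ min k (P m + 1) := by omega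
        have c2 : P (m - 1) ≤ max i (P (m - 1) + 1) := by omega
        have c3 : max i (P (m - 1) + 1) ≤ j := by omega
        have c4 : j ≤ min k (P m + 1) := by omega
        push_cast [Nat.cast_sub c1, Nat.cast_sub c2, Nat.cast_sub c3, Nat.cast_sub c4]
        ring
      rw [hcast] at hED
      have hlt := SyncAux.lt_two_lcs_of_ED hED
      have hWle : Z.length ≤ lcsLen (islice f (max i (P (m - 1) + 1)) j)
          (islice f j (min k (P m + 1))) := SyncAux.le_lcsLen h1 h2
      have hsum : ((islice f (max i (P (m - 1) + 1)) j).length : ℝ) +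
          ((islice f j (min k (P m + 1))).length : ℝ) ≤ (k : ℝ) - i := by
        rw [SyncAux.length_islice, SyncAux.length_islice]
        have c5 : (j - max i (P (m - 1) + 1)) + (min k (P m + 1) - j) + i ≤ k := by omega
        have c5' : ((j - max i (P (m - 1) + 1) : ℕ) : ℝ) +
            ((min k (P m + 1) - j : ℕ) : ℝ) + (i : ℝ) ≤ (k : ℝ) := by exact_mod_cast c5
        linarith
      have hZcast : (Z.length : ℝ) ≤ (lcsLen (islice f (max i (P (m - 1) + 1)) j)
          (islice f j (min k (P m + 1))) : ℝ) := by exact_mod_cast hWle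
      have hmul := mul_le_mul_of_nonneg_left hsum (by linarith : (0 : ℝ) ≤ ε / 2)
      linarith
  -- the W bound, case 2 (cross block, via length counting)
  have hwcase2 : ∀ Z : List α, Z.Sublist (islice f i (max i (P (m - 1) + 1))) →
      Z.Sublist (islice f (min k (P m + 1)) k) →
      Z.length = 0 ∨ 2 * (Z.length : ℝ) < ε / 2 * ((k : ℝ) - i) := by
    intro Z h1 h2
    rcases Nat.eq_zero_or_pos Z.length with hZ0 | hZpos
    · left; exact hZ0
    · right
      have hb1 : Z.length + i ≤ max i (P (m - 1) + 1) := by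
        have := h1.length_le; rw [SyncAux.length_islice] at this; omega
      have hb2 : Z.length + min k (P m + 1) ≤ k := by
        have := h2.length_le; rw [SyncAux.length_islice] at this; omega
      have hnum := SyncAux.numeric2 hK5 hi hij hjk hmlt hmle hsid hb1 hb2 hZpos
      have hnum' : (K : ℝ) * (Z.length : ℝ) + (i : ℝ) < (k : ℝ) := by exact_mod_cast hnum
      have hKpos : (0 : ℝ) < (K : ℝ) := by
        have : (5 : ℝ) ≤ (K : ℝ) := by exact_mod_cast hK5
        linarith
      have hki : (0 : ℝ) ≤ (k : ℝ) - (i : ℝ) := by nlinarith [hnum', hKpos, Nat.cast_nonneg (α := ℝ) Z.length, mul_nonneg hKpos.le (Nat.cast_nonneg (α := ℝ) Z.length)]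
      -- 2 * w < (2/K) * (k - i) ≤ (ε/2)(k-i)
      nlinarith [hnum', hK4, hKpos, hki, mul_le_mul_of_nonneg_right hK4 hki,
        Nat.cast_nonneg (α := ℝ) Z.length]
  -- final assembly lemma
  have hfinal : ∀ x w y : ℕ,
      lcsLen (islice f i j) (islice f j k) = x + (w + y) →
      x + i ≤ max i (P (m - 2) + 1) →
      y ≤ K ^ m → y + min k (P (m + 1) + 1) ≤ k →
      (w = 0 ∨ 2 * (w : ℝ) < ε / 2 * ((k : ℝ) - i)) →
      (1 - ε) * ((k : ℝ) - (i : ℝ)) <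
        (editDistance (islice f i j) (islice f j k) : ℝ) := by
    intro x w y hlcs hx hy1 hy2 hw
    have hid : x = 0 ∨ K * P (m - 2) + K = P (m - 1) := by
      rcases Nat.lt_or_ge m 2 with h | h
      · left
        have h0 : P (m - 2) = 0 := by rw [show m - 2 = 0 by omega]; exact hP0
        omega
      · right
        have hh := hPm (m - 2)
        have hmm : m - 2 + 1 = m - 1 := by omega
        rw [hmm] at hh; exact hh
    have hp3 : K ^ (m + 1) = K * K ^ m := by rw [pow_succ]; ring
    have hnum := SyncAux.numeric1 hK5 hi hij hjk hmlt hmle hse hEe hp3 hx hid hy1 hy2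
    have hnum' : (K : ℝ) * (x : ℝ) + (K : ℝ) * (y : ℝ) + (i : ℝ) ≤ (k : ℝ) := by
      exact_mod_cast hnum
    have hKpos : (0 : ℝ) < (K : ℝ) := by
      have : (5 : ℝ) ≤ (K : ℝ) := by exact_mod_cast hK5
      linarith
    have hki : (0 : ℝ) < (k : ℝ) - (i : ℝ) := by
      have : i < k := by omega
      have := (Nat.cast_lt (α := ℝ)).mpr this
      linarith
    have hx4 : 0 ≤ (ε * K - 4) * (x : ℝ) :=
      mul_nonneg (by linarith) (Nat.cast_nonneg x)
    have hy4 : 0 ≤ (ε * K - 4) * (y : ℝ) :=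
      mul_nonneg (by linarith) (Nat.cast_nonneg y)
    have hmulKxy : ε / 2 * ((K : ℝ) * x + (K : ℝ) * y) ≤ ε / 2 * ((k : ℝ) - i) :=
      mul_le_mul_of_nonneg_left (by linarith) (by linarith)
    have h2xy : 2 * ((x : ℝ) + (y : ℝ)) ≤ ε / 2 * ((k : ℝ) - i) := by
      nlinarith [hx4, hy4, hmulKxy]
    have hgoal : 2 * ((lcsLen (islice f i j) (islice f j k)) : ℝ) <
        ε * (((islice f i j).length : ℝ) + ((islice f j k).length : ℝ)) := by
      have hsum : ((islice f i j).length : ℝ) + ((islice f j k).length : ℝ) =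
          (k : ℝ) - i := by
        rw [SyncAux.length_islice, SyncAux.length_islice]
        have c1 : ((j - i : ℕ) : ℝ) = (j : ℝ) - i := by
          rw [Nat.cast_sub (by omega)]
        have c2 : ((k - j : ℕ) : ℝ) = (k : ℝ) - j := by
          rw [Nat.cast_sub (by omega)]
        rw [c1, c2]; ring
      rw [hsum, hlcs]
      push_cast
      rcases hw with h0 | hlt
      · subst h0; push_cast; nlinarith [h2xy, mul_pos (half_pos hε) hki]
      · nlinarith [h2xy, hlt]
    have hfin := SyncAux.ED_of_two_lcs_lt hgoal
    have hsum : ((islice f i j).length : ℝ) + ((islice f j k).length : ℝ) =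
        (k : ℝ) - i := by
      rw [SyncAux.length_islice, SyncAux.length_islice]
      have c1 : ((j - i : ℕ) : ℝ) = (j : ℝ) - i := by rw [Nat.cast_sub (by omega)]
      have c2 : ((k - j : ℕ) : ℝ) = (k : ℝ) - j := by rw [Nat.cast_sub (by omega)]
      rw [c1, c2]; ring
    rw [hsum] at hfin
    exact hfin
  -- main decomposition
  obtain ⟨U, hUlen, hUL, hUR⟩ := SyncAux.exists_lcs (islice f i j) (islice f j k)
  rw [hL, List.sublist_append_iff] at hUL
  obtain ⟨U1, U2, hUeq1, hU1, hU2⟩ := hUL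
  rw [hR, List.sublist_append_iff] at hUR
  obtain ⟨V1, V2, hUeq2, hV1, hV2⟩ := hUR
  have hEq : U1 ++ U2 = V1 ++ V2 := by rw [← hUeq1, ← hUeq2]
  have hjuK : j - max i (P (m - 1) + 1) ≤ K ^ m := by omega
  rcases List.append_eq_append_iff.mp hEq with ⟨W, hV1eq, hU2eq⟩ | ⟨W, hU1eq, hV2eq⟩
  · -- case 1 : V1 = U1 ++ W, U2 = W ++ V2
    have hU1X : ∀ x ∈ U1, x ∈ X := fun x hx =>
      hXR1 x (hV1.subset (by rw [hV1eq]; exact List.mem_append_left _ hx))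
    have hV2X : ∀ x ∈ V2, x ∈ X := fun x hx =>
      hXL2 x (hU2.subset (by rw [hU2eq]; exact List.mem_append_right _ hx))
    have hWsub1 : W.Sublist (islice f (max i (P (m - 1) + 1)) j) :=
      ((List.prefix_append W V2).sublist.trans (hU2eq ▸ hU2))
    have hWsub2 : W.Sublist (islice f j (min k (P m + 1))) :=
      ((List.suffix_append U1 W).sublist.trans (hV1eq ▸ hV1))
    have hxb := hcount1 U1 hU1 hU1X
    have hyb2 := hcount2 V2 hV2 hV2X
    have hyb1 : V2.length ≤ K ^ m := by
      have h1 : U2.length = W.length + V2.length := by rw [hU2eq, List.length_append]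
      have h2 := hU2.length_le
      rw [SyncAux.length_islice] at h2
      omega
    have hw := hsyncW W hWsub1 hWsub2
    have hlcs : lcsLen (islice f i j) (islice f j k) =
        U1.length + (W.length + V2.length) := by
      rw [← hUlen, hUeq1, hU2eq]
      simp [List.length_append]
    exact hfinal U1.length W.length V2.length hlcs hxb hyb1 hyb2 hw
  · -- case 2 : U1 = V1 ++ W, V2 = W ++ U2
    have hV1X : ∀ x ∈ V1, x ∈ X := fun x hx => hXR1 x (hV1.subset hx)
    have hU2X : ∀ x ∈ U2, x ∈ X := fun x hx => hXL2 x (hU2.subset hx)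
    have hV1sub : V1.Sublist (islice f i (max i (P (m - 1) + 1))) :=
      ((List.prefix_append V1 W).sublist.trans (hU1eq ▸ hU1))
    have hU2sub : U2.Sublist (islice f (min k (P m + 1)) k) :=
      ((List.suffix_append W U2).sublist.trans (hV2eq ▸ hV2))
    have hWsub1 : W.Sublist (islice f i (max i (P (m - 1) + 1))) :=
      ((List.suffix_append V1 W).sublist.trans (hU1eq ▸ hU1))
    have hWsub2 : W.Sublist (islice f (min k (P m + 1)) k) :=
      ((List.prefix_append W U2).sublist.trans (hV2eq ▸ hV2))
    have hxb := hcount1 V1 hV1sub hV1X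
    have hyb2 := hcount2 U2 hU2sub hU2X
    have hyb1 : U2.length ≤ K ^ m := by
      have h2 := hU2.length_le
      rw [SyncAux.length_islice] at h2
      omega
    have hw := hwcase2 W hWsub1 hWsub2
    have hlcs : lcsLen (islice f i j) (islice f j k) =
        V1.length + (W.length + U2.length) := by
      rw [← hUlen, hUeq1, hU1eq]
      simp [List.length_append]
    exact hfinal V1.length W.length U2.length hlcs hxb hyb1 hyb2 hw


/-- Let `ε ∈ (0,1)`, `k = ⌈4/ε⌉`, and let `A`, `B` be disjoint
alphabets. If for every `i ≥ 1` we have an `(ε/2)`-synchronization string `T i`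
of length `k^i`, over `A` for odd `i` and over `B` for even `i`, then the
infinite sequential concatenation `f = T 1 ∘ T 2 ∘ …` is an infinite
ε-synchronization string. -/
theorem infinite_concat_isInfSyncString {α : Type*} (ε : ℝ)
    (hε : 0 < ε) (hε1 : ε < 1)
    (A B : Set α) (hAB : Disjoint A B)
    (T : ℕ → List α)
    (hlen : ∀ i : ℕ, 1 ≤ i → (T i).length = (⌈(4 : ℝ) / ε⌉₊) ^ i)
    (hsync : ∀ i : ℕ, 1 ≤ i → IsSyncString (ε / 2) (T i))
    (hodd : ∀ i : ℕ, 1 ≤ i → Odd i → ∀ x ∈ T i, x ∈ A)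
    (heven : ∀ i : ℕ, 1 ≤ i → Even i → ∀ x ∈ T i, x ∈ B)
    (f : ℕ → α)
    (hconcat : ∀ i : ℕ, 1 ≤ i →
      islice f ((∑ j ∈ Finset.Icc 1 (i - 1), (⌈(4 : ℝ) / ε⌉₊) ^ j) + 1)
               ((∑ j ∈ Finset.Icc 1 i, (⌈(4 : ℝ) / ε⌉₊) ^ j) + 1) = T i) :
    IsInfSyncString ε f := by
  have hKR : (4 : ℝ) / ε ≤ (⌈(4 : ℝ) / ε⌉₊ : ℝ) := Nat.le_ceil _
  have hK4 : (4 : ℝ) ≤ ε * ⌈(4 : ℝ) / ε⌉₊ := by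
    rw [div_le_iff₀ hε] at hKR
    linarith
  have hK5 : 5 ≤ ⌈(4 : ℝ) / ε⌉₊ := by
    have h4 : (4 : ℝ) < 4 / ε := by
      rw [lt_div_iff₀ hε]; nlinarith
    have h5 : (4 : ℝ) < (⌈(4 : ℝ) / ε⌉₊ : ℝ) := lt_of_lt_of_le h4 hKR
    have h6 : (4 : ℕ) < ⌈(4 : ℝ) / ε⌉₊ := by exact_mod_cast h5
    omega
  exact concat_main ε hε hε1 A B hAB ⌈(4 : ℝ) / ε⌉₊ hK4 hK5
    (fun n => ∑ j ∈ Finset.Icc 1 n, ⌈(4 : ℝ) / ε⌉₊ ^ j) (by simp)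
    (fun n => SyncAux.P_succ _ n) (fun n => SyncAux.P_mul _ n)
    T hlen hsync hodd heven f hconcat
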